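/- Let F be a field, let n ≥ 1 and let ξ_1, …, ξ_n ∈ F be such that ξ_i ξ_j + 1 − 2 ξ_i ≠ 0 for all 1 ≤ i, j ≤ n (in particular ξ_k ≠ 1 for every k, since ξ_k² + 1 − 2ξ_k = (1 − ξ_k)²). Then the n × n determinant satisfies det( 1/(ξ_i ξ_j + 1 − 2 ξ_i) )_{i,j=1,…,n} = ∏_{k=1}^n 1/(1 − ξ_k)² · ∏_{1 ≤ i ≠ j ≤ n} (ξ_i − ξ_j)/(ξ_i ξ_j + 1 − 2 ξ_j). -/

import Mathlib

open Finset

lemma prod_lt_pairs {M : Type*} [CommMonoid M] {n : ℕ} (g : Fin n → Fin n → M) :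
    ∏ p ∈ Finset.univ.filter (fun p : Fin n × Fin n => p.1 < p.2), g p.1 p.2
      = ∏ i : Fin n, ∏ j ∈ Ioi i, g i j := by
  rw [Finset.prod_filter, ← Finset.univ_product_univ, Finset.prod_product]
  refine Finset.prod_congr rfl fun i _ => ?_
  rw [← Finset.prod_filter]
  refine Finset.prod_congr ?_ (fun _ _ => rfl)
  ext j; simp

lemma prod_offdiag {M : Type*} [CommMonoid M] {n : ℕ} (g : Fin n → Fin n → M) :
    ∏ p ∈ Finset.univ.filter (fun p : Fin n × Fin n => p.1 ≠ p.2), g p.1 p.2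
      = ∏ i : Fin n, ∏ j ∈ Ioi i, (g i j * g j i) := by
  have hsplit : (Finset.univ.filter (fun p : Fin n × Fin n => p.1 ≠ p.2))
      = (Finset.univ.filter (fun p : Fin n × Fin n => p.1 < p.2))
        ∪ (Finset.univ.filter (fun p : Fin n × Fin n => p.2 < p.1)) := by
    ext p; simp only [Finset.mem_filter, Finset.mem_union, Finset.mem_univ, true_and]
    constructor
    · intro hp; exact Ne.lt_or_gt hp
    · rintro (h1|h2); exacts [h1.ne, h2.ne']
  have hdisj : Disjoint (Finset.univ.filter (fun p : Fin n × Fin n => p.1 < p.2))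
      (Finset.univ.filter (fun p : Fin n × Fin n => p.2 < p.1)) := by
    rw [Finset.disjoint_filter]
    intro p _ h1 h2
    exact absurd h1 (not_lt_of_gt h2)
  rw [hsplit, Finset.prod_union hdisj]
  have hswap : ∏ p ∈ Finset.univ.filter (fun p : Fin n × Fin n => p.2 < p.1), g p.1 p.2
      = ∏ p ∈ Finset.univ.filter (fun p : Fin n × Fin n => p.1 < p.2), g p.2 p.1 := by
    refine Finset.prod_nbij' Prod.swap Prod.swap ?_ ?_ ?_ ?_ ?_ <;>
      simp [Prod.swap]
  rw [hswap, ← Finset.prod_mul_distrib]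
  exact prod_lt_pairs (fun i j => g i j * g j i)

lemma prod_pairs {M : Type*} [CommMonoid M] {n : ℕ} (g : Fin n → Fin n → M) :
    ∏ i : Fin n, ∏ j : Fin n, g i j
      = (∏ i : Fin n, g i i) * ∏ i : Fin n, ∏ j ∈ Ioi i, (g i j * g j i) := by
  rw [← prod_offdiag]
  rw [← Finset.prod_product', Finset.univ_product_univ,
    ← Finset.prod_filter_mul_prod_filter_not Finset.univ (fun p : Fin n × Fin n => p.1 = p.2)]
  congr 1
  · rw [Finset.prod_filter]
    rw [← Finset.univ_product_univ, Finset.prod_product]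
    refine Finset.prod_congr rfl fun i _ => ?_
    simp

lemma cauchy_det_aux : ∀ (n : ℕ) {F : Type*} [Field F] (a b : Fin n → F),
    (∀ i j, a i + b j ≠ 0) →
    Matrix.det (Matrix.of fun i j : Fin n => (a i + b j)⁻¹)
      = (∏ i : Fin n, ∏ j : Fin n, (a i + b j)⁻¹) *
        ∏ i : Fin n, ∏ j ∈ Ioi i, ((a j - a i) * (b j - b i)) := by
  intro n
  induction n with
  | zero =>
    intro F _ a b _
    simp [Matrix.det_eq_one_of_card_eq_zero]
  | succ n ih =>
    intro F _ a b h
    -- Step 1: row operations, subtracting row 0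
    have h1 : Matrix.det (Matrix.of fun i j : Fin (n+1) => (a i + b j)⁻¹)
        = Matrix.det (Matrix.of fun i j : Fin (n+1) =>
            if i = 0 then (a 0 + b j)⁻¹
            else (a 0 - a i) * ((a 0 + b j)⁻¹ * (a i + b j)⁻¹)) := by
      refine Matrix.det_eq_of_forall_row_eq_smul_add_const
        (fun i => if i = 0 then 0 else 1) 0 (if_pos rfl) ?_
      intro i j
      by_cases hi : i = 0
      · simp [hi]
      · have h1 := h i j
        have h2 := h 0 j
        simp only [Matrix.of_apply, if_neg hi, if_pos rfl, ↓reduceIte]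
        field_simp
        ring
    -- Step 2: factor out columns and rows
    have h2 : Matrix.det (Matrix.of fun i j : Fin (n+1) =>
            if i = 0 then (a 0 + b j)⁻¹
            else (a 0 - a i) * ((a 0 + b j)⁻¹ * (a i + b j)⁻¹))
        = (∏ j : Fin (n+1), (a 0 + b j)⁻¹) * ((∏ i : Fin (n+1), if i = 0 then 1 else a 0 - a i) *
            Matrix.det (Matrix.of fun i j : Fin (n+1) =>
              if i = 0 then 1 else (a i + b j)⁻¹)) := by
      rw [← Matrix.det_mul_column (fun i => if i = 0 then (1:F) else a 0 - a i)
        (Matrix.of fun i j : Fin (n+1) => if i = 0 then 1 else (a i + b j)⁻¹),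
        ← Matrix.det_mul_row (fun j => (a 0 + b j)⁻¹)]
      congr 1
      ext i j
      by_cases hi : i = 0 <;> simp [hi] <;> ring
    -- Step 3: column operations, subtracting column 0
    have h3 : Matrix.det (Matrix.of fun i j : Fin (n+1) =>
            if i = 0 then 1 else (a i + b j)⁻¹)
        = Matrix.det (Matrix.of fun i j : Fin (n+1) =>
            if j = 0 then (if i = 0 then 1 else (a i + b 0)⁻¹)
            else (if i = 0 then 0
              else (b 0 - b j) * ((a i + b 0)⁻¹ * (a i + b j)⁻¹))) := by
      rw [← Matrix.det_transpose (Matrix.of fun i j : Fin (n+1) =>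
            if i = 0 then 1 else (a i + b j)⁻¹),
        ← Matrix.det_transpose (Matrix.of fun i j : Fin (n+1) =>
            if j = 0 then (if i = 0 then 1 else (a i + b 0)⁻¹)
            else (if i = 0 then 0
              else (b 0 - b j) * ((a i + b 0)⁻¹ * (a i + b j)⁻¹)))]
      refine Matrix.det_eq_of_forall_row_eq_smul_add_const
        (fun j => if j = 0 then 0 else 1) 0 (if_pos rfl) ?_
      intro j i
      by_cases hj : j = 0
      · simp [hj]
      · by_cases hi : i = 0
        · simp [hi, hj]
        · have h1 := h i j
          have h2 := h i 0
          simp only [Matrix.transpose_apply, Matrix.of_apply, if_neg hi, if_neg hj, if_pos rfl, ↓reduceIte]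
          field_simp
          ring
    -- Step 4: factor out columns and rows again
    have h4 : Matrix.det (Matrix.of fun i j : Fin (n+1) =>
            if j = 0 then (if i = 0 then 1 else (a i + b 0)⁻¹)
            else (if i = 0 then 0
              else (b 0 - b j) * ((a i + b 0)⁻¹ * (a i + b j)⁻¹)))
        = (∏ j : Fin (n+1), if j = 0 then 1 else b 0 - b j) *
            ((∏ i : Fin (n+1), if i = 0 then 1 else (a i + b 0)⁻¹) *
            Matrix.det (Matrix.of fun i j : Fin (n+1) =>
              if j = 0 then 1 else (if i = 0 then 0 else (a i + b j)⁻¹))) := by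
      rw [← Matrix.det_mul_column (fun i => if i = 0 then (1:F) else (a i + b 0)⁻¹)
        (Matrix.of fun i j : Fin (n+1) =>
          if j = 0 then 1 else (if i = 0 then 0 else (a i + b j)⁻¹)),
        ← Matrix.det_mul_row (fun j => if j = 0 then (1:F) else b 0 - b j)]
      congr 1
      ext i j
      by_cases hi : i = 0 <;> by_cases hj : j = 0 <;> simp [hi, hj] <;> ring
    -- Step 5: Laplace expansion along the first row
    have h5 : Matrix.det (Matrix.of fun i j : Fin (n+1) =>
              if j = 0 then 1 else (if i = 0 then 0 else (a i + b j)⁻¹))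
        = Matrix.det (Matrix.of fun i j : Fin n => (a i.succ + b j.succ)⁻¹) := by
      rw [Matrix.det_succ_row_zero, Fin.sum_univ_succ]
      simp only [Matrix.of_apply, if_pos rfl, Fin.succ_ne_zero, if_false, ite_false,
        eq_self_iff_true, if_true, Fin.val_zero, pow_zero, one_mul, mul_zero, zero_mul,
        mul_one, Finset.sum_const_zero, add_zero, Fin.succAbove_zero]
      congr 1
    have h6 := ih (fun i => a i.succ) (fun j => b j.succ) (fun i j => h i.succ j.succ)
    rw [h1, h2, h3, h4, h5, h6]
    have e1 : (∏ i : Fin (n+1), if i = 0 then (1:F) else a 0 - a i)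
        = ∏ i : Fin n, (a 0 - a i.succ) := by
      rw [Fin.prod_univ_succ]; simp [Fin.succ_ne_zero]
    have e2 : (∏ j : Fin (n+1), if j = 0 then (1:F) else b 0 - b j)
        = ∏ j : Fin n, (b 0 - b j.succ) := by
      rw [Fin.prod_univ_succ]; simp [Fin.succ_ne_zero]
    have e3 : (∏ i : Fin (n+1), if i = 0 then (1:F) else (a i + b 0)⁻¹)
        = ∏ i : Fin n, (a i.succ + b 0)⁻¹ := by
      rw [Fin.prod_univ_succ]; simp [Fin.succ_ne_zero]
    have t1 : (∏ i : Fin (n+1), ∏ j : Fin (n+1), (a i + b j)⁻¹)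
        = (∏ j : Fin (n+1), (a 0 + b j)⁻¹) * ((∏ i : Fin n, (a i.succ + b 0)⁻¹)
            * ∏ i : Fin n, ∏ j : Fin n, (a i.succ + b j.succ)⁻¹) := by
      rw [Fin.prod_univ_succ]
      congr 1
      rw [← Finset.prod_mul_distrib]
      exact Finset.prod_congr rfl fun i _ => Fin.prod_univ_succ _
    have t2 : (∏ i : Fin (n+1), ∏ j ∈ Ioi i, ((a j - a i) * (b j - b i)))
        = ((∏ j : Fin n, (a 0 - a j.succ)) * (∏ j : Fin n, (b 0 - b j.succ)))
            * ∏ i : Fin n, ∏ j ∈ Ioi i, ((a j.succ - a i.succ) * (b j.succ - b i.succ)) := by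
      rw [Fin.prod_univ_succ, Fin.prod_Ioi_zero]
      congr 1
      · rw [← Finset.prod_mul_distrib]
        exact Finset.prod_congr rfl fun j _ => by ring
      · exact Finset.prod_congr rfl fun i _ => Fin.prod_Ioi_succ (fun j => (a j - a i.succ) * (b j - b i.succ)) i
    rw [e1, e2, e3, t1, t2]
    ring


/-- The Cauchy-type determinant identity (B.5):
`det(1/(ξ_i ξ_j + 1 − 2ξ_i)) = ∏_k (1 − ξ_k)^{-2} · ∏_{i ≠ j} (ξ_i − ξ_j)/(ξ_i ξ_j + 1 − 2ξ_j)`. -/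
theorem cauchy_type_det {F : Type*} [Field F] (n : ℕ) (hn : 1 ≤ n) (ξ : Fin n → F)
    (h : ∀ i j : Fin n, ξ i * ξ j + 1 - 2 * ξ i ≠ 0) :
    Matrix.det (Matrix.of fun i j : Fin n => (ξ i * ξ j + 1 - 2 * ξ i)⁻¹)
    = (∏ k : Fin n, ((1 - ξ k) ^ 2)⁻¹) *
        ∏ p ∈ Finset.univ.filter (fun p : Fin n × Fin n => p.1 ≠ p.2),
          (ξ p.1 - ξ p.2) / (ξ p.1 * ξ p.2 + 1 - 2 * ξ p.2) := by
  have hu : ∀ i, (1 : F) - ξ i ≠ 0 := by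
    intro i hz
    apply h i i
    rw [show ξ i * ξ i + 1 - 2 * ξ i = (1 - ξ i) ^ 2 by ring, hz]
    ring
  have key : ∀ i j, ξ i * ξ j + 1 - 2 * ξ i
      = (1 - ξ i) * (1 - ξ j) * ((1 - (1 - ξ i)⁻¹) + (1 - ξ j)⁻¹) := by
    intro i j
    rw [show (1 - ξ i) * (1 - ξ j) * ((1 - (1 - ξ i)⁻¹) + (1 - ξ j)⁻¹)
        = (1 - ξ i) * (1 - ξ j) - ((1 - ξ i) * (1 - ξ i)⁻¹) * (1 - ξ j)
          + ((1 - ξ j) * (1 - ξ j)⁻¹) * (1 - ξ i) from by ring,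
      mul_inv_cancel₀ (hu i), mul_inv_cancel₀ (hu j)]
    ring
  have ha : ∀ i j : Fin n, (1 - (1 - ξ i)⁻¹) + (1 - ξ j)⁻¹ ≠ 0 := by
    intro i j hz
    apply h i j
    rw [key i j, hz, mul_zero]
  have entry : ∀ i j : Fin n, (ξ i * ξ j + 1 - 2 * ξ i)⁻¹
      = (1 - ξ j)⁻¹ * ((1 - ξ i)⁻¹ * ((1 - (1 - ξ i)⁻¹) + (1 - ξ j)⁻¹)⁻¹) := by
    intro i j
    rw [key i j, mul_inv, mul_inv]
    ring
  rw [show (Matrix.of fun i j : Fin n => (ξ i * ξ j + 1 - 2 * ξ i)⁻¹)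
      = Matrix.of fun i j : Fin n =>
        (1 - ξ j)⁻¹ * ((1 - ξ i)⁻¹ * ((1 - (1 - ξ i)⁻¹) + (1 - ξ j)⁻¹)⁻¹) from by
    ext i j; exact entry i j]
  rw [Matrix.det_mul_row (fun j => (1 - ξ j)⁻¹) (fun i j => (1 - ξ i)⁻¹ * ((1 - (1 - ξ i)⁻¹) + (1 - ξ j)⁻¹)⁻¹)]
  rw [show (Matrix.det fun i j : Fin n =>
        (1 - ξ i)⁻¹ * ((1 - (1 - ξ i)⁻¹) + (1 - ξ j)⁻¹)⁻¹)
      = Matrix.det (Matrix.of fun i j : Fin n =>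
        (1 - ξ i)⁻¹ * ((1 - (1 - ξ i)⁻¹) + (1 - ξ j)⁻¹)⁻¹) from rfl,
    Matrix.det_mul_column (fun i => (1 - ξ i)⁻¹) (fun i j => ((1 - (1 - ξ i)⁻¹) + (1 - ξ j)⁻¹)⁻¹)]
  rw [show (Matrix.det fun i j : Fin n => ((1 - (1 - ξ i)⁻¹) + (1 - ξ j)⁻¹)⁻¹)
      = Matrix.det (Matrix.of fun i j : Fin n => ((1 - (1 - ξ i)⁻¹) + (1 - ξ j)⁻¹)⁻¹) from rfl]
  rw [cauchy_det_aux n (fun i => 1 - (1 - ξ i)⁻¹) (fun j => (1 - ξ j)⁻¹) ha,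
    prod_offdiag (fun i j : Fin n => (ξ i - ξ j) / (ξ i * ξ j + 1 - 2 * ξ j)),
    prod_pairs (fun i j : Fin n => ((1 - (1 - ξ i)⁻¹) + (1 - ξ j)⁻¹)⁻¹)]
  have hdiag : ∏ i : Fin n, ((1 - (1 - ξ i)⁻¹) + (1 - ξ i)⁻¹)⁻¹ = 1 := by
    refine Finset.prod_eq_one fun i _ => ?_
    rw [sub_add_cancel, inv_one]
  rw [hdiag, one_mul]
  have hsq : (∏ k : Fin n, ((1 - ξ k) ^ 2)⁻¹)
      = (∏ k : Fin n, (1 - ξ k)⁻¹) * ∏ k : Fin n, (1 - ξ k)⁻¹ := by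
    rw [← Finset.prod_mul_distrib]
    exact Finset.prod_congr rfl fun k _ => by rw [sq, mul_inv]
  rw [hsq]
  have gform : ∀ i j : Fin n, (ξ i - ξ j) / (ξ i * ξ j + 1 - 2 * ξ j)
      = ((1 - ξ i)⁻¹ - (1 - ξ j)⁻¹) / ((1 - (1 - ξ j)⁻¹) + (1 - ξ i)⁻¹) := by
    intro i j
    have d1 : ξ i * ξ j + 1 - 2 * ξ j ≠ 0 := by
      have := h j i
      rwa [mul_comm (ξ j) (ξ i)] at this
    rw [div_eq_div_iff d1 (ha j i)]
    apply mul_left_cancel₀ (mul_ne_zero (hu i) (hu j))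
    rw [show (1 - ξ i) * (1 - ξ j) * ((ξ i - ξ j) * ((1 - (1 - ξ j)⁻¹) + (1 - ξ i)⁻¹))
        = (ξ i - ξ j) * ((1 - ξ i) * (1 - ξ j) - ((1 - ξ j) * (1 - ξ j)⁻¹) * (1 - ξ i)
          + ((1 - ξ i) * (1 - ξ i)⁻¹) * (1 - ξ j)) from by ring,
      show (1 - ξ i) * (1 - ξ j) * (((1 - ξ i)⁻¹ - (1 - ξ j)⁻¹) * (ξ i * ξ j + 1 - 2 * ξ j))
        = (((1 - ξ i) * (1 - ξ i)⁻¹) * (1 - ξ j) - ((1 - ξ j) * (1 - ξ j)⁻¹) * (1 - ξ i))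
          * (ξ i * ξ j + 1 - 2 * ξ j) from by ring,
      mul_inv_cancel₀ (hu i), mul_inv_cancel₀ (hu j)]
    ring
  have main : (∏ i : Fin n, ∏ j ∈ Ioi i,
        (((1 - (1 - ξ i)⁻¹) + (1 - ξ j)⁻¹)⁻¹ * ((1 - (1 - ξ j)⁻¹) + (1 - ξ i)⁻¹)⁻¹)) *
      ∏ i : Fin n, ∏ j ∈ Ioi i,
        (((1 - (1 - ξ j)⁻¹) - (1 - (1 - ξ i)⁻¹)) * ((1 - ξ j)⁻¹ - (1 - ξ i)⁻¹))
      = ∏ i : Fin n, ∏ j ∈ Ioi i,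
        ((ξ i - ξ j) / (ξ i * ξ j + 1 - 2 * ξ j) * ((ξ j - ξ i) / (ξ j * ξ i + 1 - 2 * ξ i))) := by
    rw [← Finset.prod_mul_distrib]
    refine Finset.prod_congr rfl fun i _ => ?_
    rw [← Finset.prod_mul_distrib]
    refine Finset.prod_congr rfl fun j _ => ?_
    rw [gform i j, gform j i]
    rw [div_eq_mul_inv, div_eq_mul_inv]
    ring
  calc (∏ j : Fin n, (1 - ξ j)⁻¹) * ((∏ i : Fin n, (1 - ξ i)⁻¹) *
        ((∏ i : Fin n, ∏ j ∈ Ioi i,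
          (((1 - (1 - ξ i)⁻¹) + (1 - ξ j)⁻¹)⁻¹ * ((1 - (1 - ξ j)⁻¹) + (1 - ξ i)⁻¹)⁻¹)) *
        ∏ i : Fin n, ∏ j ∈ Ioi i,
          (((1 - (1 - ξ j)⁻¹) - (1 - (1 - ξ i)⁻¹)) * ((1 - ξ j)⁻¹ - (1 - ξ i)⁻¹))))
      = (∏ j : Fin n, (1 - ξ j)⁻¹) * ((∏ i : Fin n, (1 - ξ i)⁻¹) *
          ∏ i : Fin n, ∏ j ∈ Ioi i,
            ((ξ i - ξ j) / (ξ i * ξ j + 1 - 2 * ξ j) * ((ξ j - ξ i) / (ξ j * ξ i + 1 - 2 * ξ i)))) := by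
        rw [main]
    _ = _ := by ring
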